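/- Let H be an N×N complex Hadamard matrix (N ≥ 1). For indices i,j define the matrix P_{ij} ∈ M_N(ℂ) with entries (P_{ij})_{kl} = (1/N)·H_{ik}H_{jl}·conj(H_{il}H_{jk}). Then the matrix P = (P_{ij}) is magic: each P_{ij} is a self-adjoint idempotent (P_{ij}* = P_{ij} and P_{ij}² = P_{ij}), and for every fixed i one has Σ_j P_{ij} = Id_N, and for every fixed j one has Σ_i P_{ij} = Id_N. -/

import Mathlib

open Matrix BigOperators ComplexConjugate

/-- `H` is a complex Hadamard matrix: all entries have modulus one, and the rows are
pairwise orthogonal, `∑ k, H i k * conj (H j k) = N·δ_{ij}` where `N` is the size. -/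
def IsHadamard {I : Type*} [Fintype I] [DecidableEq I] (H : Matrix I I ℂ) : Prop :=
  (∀ i j, ‖H i j‖ = 1) ∧
  (∀ i j, ∑ k, H i k * conj (H j k) = if i = j then (Fintype.card I : ℂ) else 0)

/-- The rank-one projection `P_{ij} = Proj(H_i/H_j)`, with entries
`(P_{ij})_{kl} = (1/N)·H_{ik}·H_{jl}·conj(H_{il}·H_{jk})`. -/
noncomputable def hadamardProj {I : Type*} [Fintype I] (H : Matrix I I ℂ) (i j : I) :
    Matrix I I ℂ :=
  fun k l => (Fintype.card I : ℂ)⁻¹ * H i k * H j l * conj (H i l * H j k)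

/-- for a complex Hadamard matrix `H`, the matrix `P = (P_{ij})` is magic:
each `P_{ij}` is a self-adjoint idempotent, and each row and each column of `P`
sums to the identity matrix. -/
theorem hadamardProj_magic (N : ℕ) (hN : 1 ≤ N) (H : Matrix (Fin N) (Fin N) ℂ)
    (hH : _root_.IsHadamard H) :
    (∀ i j, (hadamardProj H i j)ᴴ = hadamardProj H i j) ∧
    (∀ i j, hadamardProj H i j * hadamardProj H i j = hadamardProj H i j) ∧
    (∀ i, ∑ j, hadamardProj H i j = 1) ∧
    (∀ j, ∑ i, hadamardProj H i j = 1) := by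
  obtain ⟨habs, horth⟩ := hH
  have hcard : (Fintype.card (Fin N) : ℂ) = (N : ℂ) := by simp
  have hNc : (Fintype.card (Fin N) : ℂ) ≠ 0 := by
    rw [hcard]; exact_mod_cast Nat.cast_ne_zero.mpr (by omega : N ≠ 0)
  have hmod : ∀ i j, H i j * conj (H i j) = 1 := by
    intro i j
    rw [Complex.mul_conj]
    rw [Complex.normSq_eq_norm_sq, habs]
    norm_num
  have hrow : H * Hᴴ = (Fintype.card (Fin N) : ℂ) • 1 := by
    ext i j
    have := horth i j
    simp only [Matrix.mul_apply, Matrix.conjTranspose_apply, Matrix.smul_apply,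
      Matrix.one_apply, ← starRingEnd_apply]
    rw [this]
    by_cases h : i = j <;> simp [h]
  have hcolM : Hᴴ * H = (Fintype.card (Fin N) : ℂ) • 1 := by
    have h1 : H * ((Fintype.card (Fin N) : ℂ)⁻¹ • Hᴴ) = 1 := by
      rw [Matrix.mul_smul, hrow, smul_smul, inv_mul_cancel₀ hNc, one_smul]
    have h2 := mul_eq_one_comm.mp h1
    calc Hᴴ * H = (Fintype.card (Fin N) : ℂ) • (((Fintype.card (Fin N) : ℂ)⁻¹ • Hᴴ) * H) := by
          rw [Matrix.smul_mul, smul_smul, mul_inv_cancel₀ hNc, one_smul]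
      _ = _ := by rw [h2]
  have hcol : ∀ k l, ∑ i, conj (H i k) * H i l =
      if k = l then (Fintype.card (Fin N) : ℂ) else 0 := by
    intro k l
    have := congrFun (congrFun hcolM k) l
    simp only [Matrix.mul_apply, Matrix.conjTranspose_apply, Matrix.smul_apply,
      Matrix.one_apply, ← starRingEnd_apply] at this
    rw [this]
    by_cases h : k = l <;> simp [h]
  refine ⟨?_, ?_, ?_, ?_⟩
  · intro i j
    ext k l
    simp only [hadamardProj, Matrix.conjTranspose_apply, ← starRingEnd_apply,
      _root_.map_mul, map_inv₀, Complex.conj_conj, map_natCast]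
    ring
  · intro i j
    ext k l
    rw [Matrix.mul_apply]
    have step : ∀ m : Fin N, hadamardProj H i j k m * hadamardProj H i j m l =
        (Fintype.card (Fin N) : ℂ)⁻¹ * hadamardProj H i j k l := by
      intro m
      simp only [hadamardProj, _root_.map_mul]
      linear_combination ((Fintype.card (Fin N) : ℂ)⁻¹ ^ 2 * H i k * H j l * conj (H i l) *
          conj (H j k) * (H j m * conj (H j m))) * hmod i m +
        ((Fintype.card (Fin N) : ℂ)⁻¹ ^ 2 * H i k * H j l * conj (H i l) *
          conj (H j k)) * hmod j m
    rw [Finset.sum_congr rfl (fun m _ => step m), Finset.sum_const, Finset.card_univ,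
      nsmul_eq_mul, ← mul_assoc, mul_inv_cancel₀ hNc, one_mul]
  · intro i
    ext k l
    rw [Matrix.sum_apply]
    have step : ∀ j : Fin N, hadamardProj H i j k l =
        (Fintype.card (Fin N) : ℂ)⁻¹ * H i k * conj (H i l) * (conj (H j k) * H j l) := by
      intro j
      simp only [hadamardProj, _root_.map_mul]
      ring
    rw [Finset.sum_congr rfl (fun j _ => step j), ← Finset.mul_sum, hcol k l]
    by_cases h : k = l
    · subst h
      simp only [if_pos rfl, if_true, Matrix.one_apply_eq]
      have e : (Fintype.card (Fin N) : ℂ)⁻¹ * H i k * conj (H i k) * (Fintype.card (Fin N) : ℂ)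
          = (H i k * conj (H i k)) * ((Fintype.card (Fin N) : ℂ) * (Fintype.card (Fin N) : ℂ)⁻¹) := by
        ring
      rw [e, hmod, mul_comm (Fintype.card (Fin N) : ℂ) _, inv_mul_cancel₀ hNc, one_mul]
    · simp [Matrix.one_apply, h]
  · intro j
    ext k l
    rw [Matrix.sum_apply]
    have step : ∀ i : Fin N, hadamardProj H i j k l =
        (Fintype.card (Fin N) : ℂ)⁻¹ * H j l * conj (H j k) * (conj (H i l) * H i k) := by
      intro i
      simp only [hadamardProj, _root_.map_mul]
      ring
    rw [Finset.sum_congr rfl (fun i _ => step i), ← Finset.mul_sum, hcol l k]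
    by_cases h : k = l
    · subst h
      simp only [if_pos rfl, if_true, Matrix.one_apply_eq]
      have e : (Fintype.card (Fin N) : ℂ)⁻¹ * H j k * conj (H j k) * (Fintype.card (Fin N) : ℂ)
          = (H j k * conj (H j k)) * ((Fintype.card (Fin N) : ℂ) * (Fintype.card (Fin N) : ℂ)⁻¹) := by
        ring
      rw [e, hmod, mul_comm (Fintype.card (Fin N) : ℂ) _, inv_mul_cancel₀ hNc, one_mul]
    · simp [Matrix.one_apply, h, Ne.symm h]
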